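/- Let 𝓗 be a family of nonempty connected subsets of ℝ^d, and fix H₀ ∈ 𝓗. Define D₀ = ⋃_{H ∈ 𝓗} H and, inductively, D_{j+1} = ⋃_{x ∈ D_j} convexHull ℝ (connected component of x in D_j). Define G₀ = H₀ and, inductively, G_{k+1} = convexHull ℝ (G_k ∪ ⋃ {H ∈ 𝓗 : H ∩ G_k ≠ ∅}). Then for every k ≥ 1 there exists a point x ∈ D_{k−1} such that G_k ⊆ convexHull ℝ (connected component of x in D_{k−1}). -/
import Mathlib

lemma growth_aux {d : ℕ} (𝓗 : Set (Set (EuclideanSpace ℝ (Fin d))))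
    (hconn : ∀ H ∈ 𝓗, IsConnected H)
    (Gk C Dset : Set (EuclideanSpace ℝ (Fin d)))
    (hGC : Gk ⊆ C) (hC : IsConnected C) (hCD : C ⊆ Dset)
    (hHD : ∀ H ∈ 𝓗, H ⊆ Dset) :
    ∃ x ∈ Dset,
      convexHull ℝ (Gk ∪ ⋃₀ {H | H ∈ 𝓗 ∧ (H ∩ Gk).Nonempty}) ⊆
        convexHull ℝ (connectedComponentIn Dset x) := by
  obtain ⟨x, hxC⟩ := hC.nonempty
  refine ⟨x, hCD hxC, ?_⟩
  have hT' : (C ∪ ⋃₀ {H | H ∈ 𝓗 ∧ (H ∩ Gk).Nonempty}) ⊆ connectedComponentIn Dset x := by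
    have hsubD : (C ∪ ⋃₀ {H | H ∈ 𝓗 ∧ (H ∩ Gk).Nonempty}) ⊆ Dset := by
      rintro y (hy | ⟨H, ⟨hH, -⟩, hyH⟩)
      · exact hCD hy
      · exact hHD H hH hyH
    refine IsPreconnected.subset_connectedComponentIn ?_ (Or.inl hxC) hsubD
    · apply isPreconnected_of_forall x
      rintro y (hy | ⟨H, ⟨hH, z, hzH, hzG⟩, hyH⟩)
      · exact ⟨C, Set.subset_union_left, hxC, hy, hC.isPreconnected⟩
      · refine ⟨C ∪ H, ?_, Or.inl hxC, Or.inr hyH, ?_⟩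
        · have hmem : H ∈ {H | H ∈ 𝓗 ∧ (H ∩ Gk).Nonempty} := ⟨hH, z, hzH, hzG⟩
          exact Set.union_subset Set.subset_union_left
            ((Set.subset_sUnion_of_mem hmem).trans Set.subset_union_right)
        · exact IsPreconnected.union z (hGC hzG) hzH hC.isPreconnected (hconn H hH).isPreconnected
  exact convexHull_mono (Set.Subset.trans
    (Set.union_subset_union_left _ hGC) hT')

theorem growth_subset_defect
    {d : ℕ} (𝓗 : Set (Set (EuclideanSpace ℝ (Fin d))))
    (hne : ∀ H ∈ 𝓗, H.Nonempty)
    (hconn : ∀ H ∈ 𝓗, IsConnected H)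
    (H₀ : Set (EuclideanSpace ℝ (Fin d))) (hH₀ : H₀ ∈ 𝓗)
    (D : ℕ → Set (EuclideanSpace ℝ (Fin d)))
    (hD0 : D 0 = ⋃₀ 𝓗)
    (hDsucc : ∀ j, D (j + 1) =
      ⋃ x ∈ D j, convexHull ℝ (connectedComponentIn (D j) x))
    (G : ℕ → Set (EuclideanSpace ℝ (Fin d)))
    (hG0 : G 0 = H₀)
    (hGsucc : ∀ k, G (k + 1) =
      convexHull ℝ (G k ∪ ⋃₀ {H | H ∈ 𝓗 ∧ (H ∩ G k).Nonempty})) :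
    ∀ k : ℕ, 1 ≤ k → ∃ x ∈ D (k - 1),
      G k ⊆ convexHull ℝ (connectedComponentIn (D (k - 1)) x) := by
  have hmono : ∀ j, D j ⊆ D (j + 1) := by
    intro j y hy
    rw [hDsucc j]
    exact Set.mem_biUnion hy
      (subset_convexHull ℝ _ (mem_connectedComponentIn hy))
  have hD0sub : ∀ j, D 0 ⊆ D j := by
    intro j; induction j with
    | zero => exact le_refl _
    | succ n ih => exact ih.trans (hmono n)
  have key : ∀ k : ℕ, ∃ x ∈ D k,
      G (k + 1) ⊆ convexHull ℝ (connectedComponentIn (D k) x) := by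
    intro k
    induction k with
    | zero =>
        rw [hGsucc 0, hG0]
        exact growth_aux 𝓗 hconn H₀ H₀ (D 0) (le_refl _) (hconn H₀ hH₀)
          (by rw [hD0]; exact Set.subset_sUnion_of_mem hH₀)
          (fun H hH => by rw [hD0]; exact Set.subset_sUnion_of_mem hH)
    | succ k ih =>
        obtain ⟨x, hxD, hsub⟩ := ih
        set C := convexHull ℝ (connectedComponentIn (D k) x) with hCdef
        have hCconn : IsConnected C := by
          apply (convex_convexHull ℝ _).isConnected
          exact ⟨x, subset_convexHull ℝ _ (mem_connectedComponentIn hxD)⟩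
        have hCD : C ⊆ D (k + 1) := by
          rw [hDsucc k]
          exact Set.subset_biUnion_of_mem
            (u := fun y => convexHull ℝ (connectedComponentIn (D k) y)) hxD
        rw [hGsucc (k + 1)]
        exact growth_aux 𝓗 hconn (G (k + 1)) C (D (k + 1)) hsub hCconn hCD
          (fun H hH => ((Set.subset_sUnion_of_mem hH).trans
            (hD0.symm ▸ hD0sub (k + 1))))
  intro k hk
  obtain ⟨m, rfl⟩ := Nat.exists_eq_succ_of_ne_zero (Nat.one_le_iff_ne_zero.mp hk)
  simpa using key m
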